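/- arXiv:1005.2053 — 2 statements merged into one kernel-verified Lean document; each statement's English description precedes it below -/
import Mathlib

section
/- Let p_i(z) = z^i + \sum_{k\ge 1} H^i_k z^{-k} (i = 0,1,2,...) with H^0_j = 0 for all j \ge 1. Then the equations p_j p_k = \sum_l C^l_{jk} p_l with C^l_{jk} = \delta^l_{j+k} + H^k_{j-l} + H^j_{k-l} hold for all j,k if and only if for all j,k,m \ge 1: H^{j+k}_m - H^j_{m+k} - H^k_{j+m} + \sum_{l=1}^{j-1} H^k_{j-l} H^l_m + \sum_{l=1}^{k-1} H^j_{k-l} H^l_m - \sum_{l=1}^{m-1} H^k_{m-l} H^j_l = 0. -/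
/-- The basis elements `p_i(z) = z^i + ∑_{k ≥ 1} H^i_k z^{-k}` of the big cell, encoded as
formal Laurent series in the variable `X = z⁻¹` (so `z^i` becomes `single (-i) 1`). -/
noncomputable def pBigCell (H : ℕ → ℕ → ℂ) (i : ℕ) : LaurentSeries ℂ :=
  HahnSeries.single (-(i : ℤ)) 1 +
    HahnSeries.ofPowerSeries ℤ ℂ (PowerSeries.mk fun k => if k = 0 then 0 else H i k)

/-- Extension of `H` by the convention `H^i_m = 0` for `m ≤ 0`. -/
noncomputable def Hext (H : ℕ → ℕ → ℂ) (i : ℕ) (m : ℤ) : ℂ :=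
  if 0 < m then H i m.toNat else 0

noncomputable def fPS (H : ℕ → ℕ → ℂ) (i : ℕ) : PowerSeries ℂ :=
  PowerSeries.mk fun k => if k = 0 then 0 else H i k

lemma ofPS_coeff (f : PowerSeries ℂ) (n : ℤ) :
    (HahnSeries.ofPowerSeries ℤ ℂ f).coeff n =
      if 0 ≤ n then PowerSeries.coeff n.toNat f else 0 := by
  split_ifs with h
  · lift n to ℕ using h with m
    simp [HahnSeries.ofPowerSeries_apply_coeff]
  · rw [HahnSeries.ofPowerSeries_apply, HahnSeries.embDomain_notin_range]
    simp only [Set.mem_range, not_exists]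
    intro m hm
    simp only [Nat.castOrderEmbedding_apply] at hm
    omega

lemma fPS_coeff (H : ℕ → ℕ → ℂ) (i : ℕ) (n : ℤ) :
    (HahnSeries.ofPowerSeries ℤ ℂ (fPS H i)).coeff n = Hext H i n := by
  rw [ofPS_coeff, Hext]
  split_ifs with h1 h2 h2
  · simp [fPS, PowerSeries.coeff_mk, show n.toNat ≠ 0 by omega]
  · simp [fPS, PowerSeries.coeff_mk, show n.toNat = 0 by omega]
  · omega
  · rfl

lemma pBigCell_coeff (H : ℕ → ℕ → ℂ) (i : ℕ) (n : ℤ) :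
    (pBigCell H i).coeff n = (if n = -(i : ℤ) then 1 else 0) + Hext H i n := by
  rw [pBigCell, HahnSeries.coeff_add, show (PowerSeries.mk fun k => if k = 0 then 0 else H i k) = fPS H i from rfl, fPS_coeff]
  simp [HahnSeries.coeff_single]

lemma single_mul_coeff (x : HahnSeries ℤ ℂ) (a n : ℤ) :
    (HahnSeries.single a (1 : ℂ) * x).coeff n = x.coeff (n - a) := by
  have := HahnSeries.coeff_single_mul_add (r := (1 : ℂ)) (x := x) (a := n - a) (b := a)
  rw [sub_add_cancel] at this
  simpa using this

lemma mul_single_coeff (x : HahnSeries ℤ ℂ) (a n : ℤ) :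
    (x * HahnSeries.single a (1 : ℂ)).coeff n = x.coeff (n - a) := by
  have := HahnSeries.coeff_mul_single_add (r := (1 : ℂ)) (x := x) (a := n - a) (b := a)
  rw [sub_add_cancel] at this
  simpa using this

lemma fPS_mul_coeff (H : ℕ → ℕ → ℂ) (j k m : ℕ) :
    PowerSeries.coeff m (fPS H j * fPS H k) =
      ∑ l ∈ Finset.Ico 1 m, H j l * H k (m - l) := by
  rw [PowerSeries.coeff_mul, Finset.Nat.sum_antidiagonal_eq_sum_range_succ_mk]
  rw [← Finset.sum_subset (s₁ := Finset.Ico 1 m) (by intro x hx; simp at hx ⊢; omega)]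
  · apply Finset.sum_congr rfl
    intro l hl
    simp only [Finset.mem_Ico] at hl
    simp [fPS, PowerSeries.coeff_mk, show l ≠ 0 by omega, show m - l ≠ 0 by omega]
  · intro x hx hx2
    simp only [Finset.mem_range] at hx
    simp only [Finset.mem_Ico] at hx2
    rcases (by omega : x = 0 ∨ x = m) with h | h
    · simp [h, fPS, PowerSeries.coeff_mk]
    · simp [h, fPS, PowerSeries.coeff_mk]

lemma prod_coeff (H : ℕ → ℕ → ℂ) (j k : ℕ) (n : ℤ) :
    (pBigCell H j * pBigCell H k).coeff n =
      (if n = -((j : ℤ) + k) then 1 else 0) + Hext H k (n + j) + Hext H j (n + k)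
        + (if 0 ≤ n then ∑ l ∈ Finset.Ico 1 n.toNat, H j l * H k (n.toNat - l) else 0) := by
  have hpj : pBigCell H j = HahnSeries.single (-(j : ℤ)) 1 + HahnSeries.ofPowerSeries ℤ ℂ (fPS H j) := rfl
  have hpk : pBigCell H k = HahnSeries.single (-(k : ℤ)) 1 + HahnSeries.ofPowerSeries ℤ ℂ (fPS H k) := rfl
  rw [hpj, hpk, add_mul, mul_add, mul_add]
  rw [HahnSeries.single_mul_single, ← map_mul]
  simp only [HahnSeries.coeff_add]
  rw [single_mul_coeff, mul_single_coeff, fPS_coeff, fPS_coeff, ofPS_coeff,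
    HahnSeries.coeff_single]
  have h1 : n - -(j : ℤ) = n + j := by ring
  have h2 : n - -(k : ℤ) = n + k := by ring
  rw [h1, h2, fPS_mul_coeff]
  simp only [← neg_add, one_mul]
  ring

lemma sum_smul_coeff (H : ℕ → ℕ → ℂ) (c : ℕ → ℂ) (s : Finset ℕ) (n : ℤ) :
    (∑ l ∈ s, c l • pBigCell H l).coeff n =
      ∑ l ∈ s, c l * ((if n = -(l : ℤ) then 1 else 0) + Hext H l n) := by
  rw [show (∑ l ∈ s, c l • pBigCell H l).coeff n
      = HahnSeries.coeff.addMonoidHom n (∑ l ∈ s, c l • pBigCell H l) from rfl, map_sum]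
  apply Finset.sum_congr rfl
  intro l _
  show (c l • pBigCell H l).coeff n = _
  rw [HahnSeries.coeff_smul, pBigCell_coeff]
  simp [smul_eq_mul]

lemma coeff_eq_nonpos (H : ℕ → ℕ → ℂ) (j k : ℕ) (n : ℤ) (hn : n ≤ 0) :
    (pBigCell H j * pBigCell H k).coeff n =
      (∑ l ∈ Finset.range (j + k + 1),
        ((if l = j + k then (1 : ℂ) else 0)
          + Hext H k ((j : ℤ) - l) + Hext H j ((k : ℤ) - l)) • pBigCell H l).coeff n := by
  rw [prod_coeff, sum_smul_coeff]
  have hsum : ∀ l ∈ Finset.range (j + k + 1),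
      ((if l = j + k then (1 : ℂ) else 0) + Hext H k ((j : ℤ) - l) + Hext H j ((k : ℤ) - l))
        * ((if n = -(l : ℤ) then 1 else 0) + Hext H l n)
      = if (-n).toNat = l then
          ((if l = j + k then (1 : ℂ) else 0) + Hext H k ((j : ℤ) - l) + Hext H j ((k : ℤ) - l))
        else 0 := by
    intro l _
    have hHl : Hext H l n = 0 := by rw [Hext, if_neg (by omega)]
    rw [hHl, add_zero]
    by_cases h : n = -(l : ℤ)
    · rw [if_pos h, if_pos (show (-n).toNat = l by omega), mul_one]
    · rw [if_neg h, if_neg (show ¬(-n).toNat = l by omega), mul_zero]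
  rw [Finset.sum_congr rfl hsum, Finset.sum_ite_eq]
  by_cases hmem : (-n).toNat ∈ Finset.range (j + k + 1)
  · rw [if_pos hmem]
    simp only [Finset.mem_range] at hmem
    have e1 : Hext H k (n + j) = Hext H k ((j : ℤ) - ((-n).toNat : ℕ)) := by
      congr 1 <;> omega
    have e2 : Hext H j (n + k) = Hext H j ((k : ℤ) - ((-n).toNat : ℕ)) := by
      congr 1 <;> omega
    have e3 : (if n = -((j : ℤ) + k) then (1 : ℂ) else 0)
        = (if (-n).toNat = j + k then (1 : ℂ) else 0) := by
      by_cases h : n = -((j : ℤ) + k)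
      · rw [if_pos h, if_pos (by omega)]
      · rw [if_neg h, if_neg (by omega)]
    have e4 : (if (0:ℤ) ≤ n then ∑ l ∈ Finset.Ico 1 n.toNat, H j l * H k (n.toNat - l) else 0)
        = 0 := by
      split_ifs with h
      · rw [show n.toNat = 0 by omega]; simp
      · rfl
    rw [e1, e2, e3, e4, add_zero]
  · rw [if_neg hmem]
    simp only [Finset.mem_range] at hmem
    have e1 : Hext H k (n + j) = 0 := by rw [Hext, if_neg (by omega)]
    have e2 : Hext H j (n + k) = 0 := by rw [Hext, if_neg (by omega)]
    have e3 : (if n = -((j : ℤ) + k) then (1 : ℂ) else 0) = 0 := by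
      rw [if_neg (by omega)]
    have e4 : (if (0:ℤ) ≤ n then ∑ l ∈ Finset.Ico 1 n.toNat, H j l * H k (n.toNat - l) else 0)
        = 0 := by
      rw [if_neg (by omega)]
    rw [e1, e2, e3, e4]
    ring

lemma coeff_diff_pos (H : ℕ → ℕ → ℂ) (h0 : ∀ j : ℕ, 1 ≤ j → H 0 j = 0)
    (j k m : ℕ) (hm : 1 ≤ m) :
    (∑ l ∈ Finset.range (j + k + 1),
        ((if l = j + k then (1 : ℂ) else 0)
          + Hext H k ((j : ℤ) - l) + Hext H j ((k : ℤ) - l)) • pBigCell H l).coeff (m : ℤ)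
      - (pBigCell H j * pBigCell H k).coeff (m : ℤ)
    = H (j + k) m - H j (m + k) - H k (j + m)
        + ∑ l ∈ Finset.Ico 1 j, H k (j - l) * H l m
        + ∑ l ∈ Finset.Ico 1 k, H j (k - l) * H l m
        - ∑ l ∈ Finset.Ico 1 m, H k (m - l) * H j l := by
  rw [prod_coeff, sum_smul_coeff]
  have hd : (if (m : ℤ) = -((j : ℤ) + k) then (1 : ℂ) else 0) = 0 := by
    rw [if_neg (by omega)]
  have h1 : Hext H k ((m : ℤ) + j) = H k (j + m) := by
    rw [Hext, if_pos (by omega)]; congr 1 <;> omega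
  have h2 : Hext H j ((m : ℤ) + k) = H j (m + k) := by
    rw [Hext, if_pos (by omega)]; congr 1 <;> omega
  have h3 : (if (0:ℤ) ≤ (m : ℤ) then
        ∑ l ∈ Finset.Ico 1 (m : ℤ).toNat, H j l * H k ((m : ℤ).toNat - l) else 0)
      = ∑ l ∈ Finset.Ico 1 m, H k (m - l) * H j l := by
    rw [if_pos (by omega), show (m : ℤ).toNat = m by omega]
    exact Finset.sum_congr rfl fun l _ => mul_comm _ _
  rw [hd, h1, h2, h3, zero_add]
  have hterm : ∀ l ∈ Finset.range (j + k + 1),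
      ((if l = j + k then (1 : ℂ) else 0) + Hext H k ((j : ℤ) - l) + Hext H j ((k : ℤ) - l))
        * ((if (m : ℤ) = -(l : ℤ) then 1 else 0) + Hext H l (m : ℤ))
      = (if l = j + k then H l m else 0)
          + Hext H k ((j : ℤ) - l) * H l m + Hext H j ((k : ℤ) - l) * H l m := by
    intro l _
    have : Hext H l (m : ℤ) = H l m := by
      rw [Hext, if_pos (by omega)]; congr 1 <;> omega
    rw [if_neg (by omega : ¬(m : ℤ) = -(l : ℤ)), this, zero_add]
    by_cases h : l = j + k
    · rw [if_pos h, if_pos h]; ring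
    · rw [if_neg h, if_neg h]; ring
  rw [Finset.sum_congr rfl hterm, Finset.sum_add_distrib, Finset.sum_add_distrib,
    Finset.sum_ite_eq' (Finset.range (j + k + 1)) (j + k) (fun l => H l m),
    if_pos (by simp)]
  have hb : ∑ l ∈ Finset.range (j + k + 1), Hext H k ((j : ℤ) - l) * H l m
      = ∑ l ∈ Finset.Ico 1 j, H k (j - l) * H l m := by
    rw [← Finset.sum_subset (s₁ := Finset.Ico 1 j)
        (by intro x hx; simp at hx ⊢; omega)
        (by
          intro x hx hx2
          simp only [Finset.mem_range] at hx
          simp only [Finset.mem_Ico] at hx2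
          rcases (by omega : x = 0 ∨ j ≤ x) with h | h
          · subst h; rw [h0 m hm, mul_zero]
          · rw [Hext, if_neg (by omega), zero_mul])]
    refine Finset.sum_congr rfl fun l hl => ?_
    simp only [Finset.mem_Ico] at hl
    congr 1
    rw [Hext, if_pos (by omega)]; congr 1 <;> omega
  have hc : ∑ l ∈ Finset.range (j + k + 1), Hext H j ((k : ℤ) - l) * H l m
      = ∑ l ∈ Finset.Ico 1 k, H j (k - l) * H l m := by
    rw [← Finset.sum_subset (s₁ := Finset.Ico 1 k)
        (by intro x hx; simp at hx ⊢; omega)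
        (by
          intro x hx hx2
          simp only [Finset.mem_range] at hx
          simp only [Finset.mem_Ico] at hx2
          rcases (by omega : x = 0 ∨ k ≤ x) with h | h
          · subst h; rw [h0 m hm, mul_zero]
          · rw [Hext, if_neg (by omega), zero_mul])]
    refine Finset.sum_congr rfl fun l hl => ?_
    simp only [Finset.mem_Ico] at hl
    congr 1
    rw [Hext, if_pos (by omega)]; congr 1 <;> omega
  rw [hb, hc]
  ring

lemma E_all (H : ℕ → ℕ → ℂ) (h0 : ∀ j : ℕ, 1 ≤ j → H 0 j = 0)
    (hE : ∀ j k m : ℕ, 1 ≤ j → 1 ≤ k → 1 ≤ m →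
      H (j + k) m - H j (m + k) - H k (j + m)
        + ∑ l ∈ Finset.Ico 1 j, H k (j - l) * H l m
        + ∑ l ∈ Finset.Ico 1 k, H j (k - l) * H l m
        - ∑ l ∈ Finset.Ico 1 m, H k (m - l) * H j l = 0) :
    ∀ j k m : ℕ, 1 ≤ m →
      H (j + k) m - H j (m + k) - H k (j + m)
        + ∑ l ∈ Finset.Ico 1 j, H k (j - l) * H l m
        + ∑ l ∈ Finset.Ico 1 k, H j (k - l) * H l m
        - ∑ l ∈ Finset.Ico 1 m, H k (m - l) * H j l = 0 := by
  intro j k m hm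
  rcases Nat.eq_zero_or_pos j with hj | hj
  · subst hj
    have s1 : ∑ l ∈ Finset.Ico 1 k, H 0 (k - l) * H l m = 0 :=
      Finset.sum_eq_zero fun l hl => by
        simp only [Finset.mem_Ico] at hl; rw [h0 (k - l) (by omega), zero_mul]
    have s2 : ∑ l ∈ Finset.Ico 1 m, H k (m - l) * H 0 l = 0 :=
      Finset.sum_eq_zero fun l hl => by
        simp only [Finset.mem_Ico] at hl; rw [h0 l (by omega), mul_zero]
    rw [s1, s2, h0 (m + k) (by omega)]
    simp
  rcases Nat.eq_zero_or_pos k with hk | hk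
  · subst hk
    have s1 : ∑ l ∈ Finset.Ico 1 j, H 0 (j - l) * H l m = 0 :=
      Finset.sum_eq_zero fun l hl => by
        simp only [Finset.mem_Ico] at hl; rw [h0 (j - l) (by omega), zero_mul]
    have s2 : ∑ l ∈ Finset.Ico 1 m, H 0 (m - l) * H j l = 0 :=
      Finset.sum_eq_zero fun l hl => by
        simp only [Finset.mem_Ico] at hl; rw [h0 (m - l) (by omega), zero_mul]
    rw [s1, s2, h0 (j + m) (by omega)]
    simp
  · exact hE j k m hj hk hm

/-- with `H^0_j = 0`, the equations `p_j p_k = ∑_l C^l_{jk} p_l` with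
`C^l_{jk} = δ^l_{j+k} + H^k_{j-l} + H^j_{k-l}` hold for all `j,k` iff the big-cell
associativity conditions hold for all `j,k,m ≥ 1`. -/
theorem bigcell_closure_iff_associativity (H : ℕ → ℕ → ℂ)
    (h0 : ∀ j : ℕ, 1 ≤ j → H 0 j = 0) :
    (∀ j k : ℕ,
      pBigCell H j * pBigCell H k =
        ∑ l ∈ Finset.range (j + k + 1),
          ((if l = j + k then 1 else 0)
            + Hext H k ((j : ℤ) - l) + Hext H j ((k : ℤ) - l)) • pBigCell H l)
    ↔
    (∀ j k m : ℕ, 1 ≤ j → 1 ≤ k → 1 ≤ m →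
      H (j + k) m - H j (m + k) - H k (j + m)
        + ∑ l ∈ Finset.Ico 1 j, H k (j - l) * H l m
        + ∑ l ∈ Finset.Ico 1 k, H j (k - l) * H l m
        - ∑ l ∈ Finset.Ico 1 m, H k (m - l) * H j l = 0) := by
  constructor
  · intro hp j k m hj hk hm
    have hc := congrArg (fun x => x.coeff (m : ℤ)) (hp j k)
    have hd := coeff_diff_pos H h0 j k m hm
    rw [← hc, sub_self] at hd
    exact hd.symm
  · intro hE j k
    have hEall := E_all H h0 hE
    apply HahnSeries.coeff_inj.mp
    funext n
    rcases le_or_gt n 0 with hn | hn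
    · exact coeff_eq_nonpos H j k n hn
    · have hm : 1 ≤ n.toNat := by omega
      have hd := coeff_diff_pos H h0 j k n.toNat hm
      rw [hEall j k n.toNat hm] at hd
      have hn' : ((n.toNat : ℕ) : ℤ) = n := by omega
      rw [hn'] at hd
      have := sub_eq_zero.mp hd
      exact this.symm
end

section
/- Suppose the coefficients H^j_k satisfy the big-cell associativity conditions H^{j+k}_m - H^j_{m+k} - H^k_{j+m} + \sum_{l=1}^{j-1} H^k_{j-l} H^l_m + \sum_{l=1}^{k-1} H^j_{k-l} H^l_m - \sum_{l=1}^{m-1} H^k_{m-l} H^j_l = 0 for all j,k,m \ge 1 (with H^i_m = 0 for m \le 0). Then n H^i_n = i H^n_i for all i,n \ge 1. -/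
noncomputable section
open HahnSeries Finset

abbrev LL := HahnSeries ℤ ℂ

/-- multiply coefficient at `v` by `v`. -/
def Tf (F : LL) : LL :=
  ⟨fun v => (v : ℂ) * F.coeff v, F.isPWO_support.mono (by
    intro v hv
    simp only [Function.mem_support, ne_eq] at hv ⊢
    intro h; exact hv (by rw [h, mul_zero]))⟩

@[simp] lemma Tf_coeff (F : LL) (v : ℤ) : (Tf F).coeff v = (v : ℂ) * F.coeff v := rfl

lemma Tf_add (F G : LL) : Tf (F + G) = Tf F + Tf G := by
  ext v; simp [mul_add]

lemma Tf_mul (F G : LL) : Tf (F * G) = Tf F * G + F * Tf G := by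
  ext v
  have hF : (Tf F).support ⊆ F.support := by
    intro a ha
    simp only [HahnSeries.support, Function.mem_support, ne_eq, Tf_coeff] at ha ⊢
    intro h; exact ha (by rw [h, mul_zero])
  have hG : (Tf G).support ⊆ G.support := by
    intro a ha
    simp only [HahnSeries.support, Function.mem_support, ne_eq, Tf_coeff] at ha ⊢
    intro h; exact ha (by rw [h, mul_zero])
  rw [coeff_add, coeff_mul_left' F.isPWO_support hF, coeff_mul_right' G.isPWO_support hG,
    Tf_coeff, coeff_mul, Finset.mul_sum, ← Finset.sum_add_distrib]
  refine Finset.sum_congr rfl ?_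
  rintro ⟨a, b⟩ hab
  rw [Finset.mem_addAntidiagonal] at hab
  have : ((a : ℂ) + (b : ℂ)) = (v : ℂ) := by
    rw [← Int.cast_add, hab.2.2]
  simp only [Tf_coeff]
  calc (v:ℂ) * (F.coeff a * G.coeff b) = ((a:ℂ)+(b:ℂ)) * (F.coeff a * G.coeff b) := by rw [this]
    _ = (a:ℂ) * F.coeff a * G.coeff b + F.coeff a * ((b:ℂ) * G.coeff b) := by ring

/-- formal derivative -/
def Dd (F : LL) : LL := single (-1 : ℤ) (1 : ℂ) * Tf F

lemma Dd_coeff (F : LL) (v : ℤ) : (Dd F).coeff v = ((v : ℂ) + 1) * F.coeff (v + 1) := by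
  have h := coeff_single_mul_add (r := (1:ℂ)) (x := Tf F) (a := v + 1) (b := (-1 : ℤ))
  have hv : v + 1 + (-1 : ℤ) = v := by ring
  rw [hv] at h
  rw [Dd, h, one_mul, Tf_coeff]
  push_cast; ring

lemma Dd_add (F G : LL) : Dd (F + G) = Dd F + Dd G := by
  rw [Dd, Dd, Dd, Tf_add, mul_add]

lemma Dd_mul (F G : LL) : Dd (F * G) = Dd F * G + F * Dd G := by
  rw [Dd, Dd, Dd, Tf_mul, mul_add]
  ring

lemma Dd_coeff_neg_one (F : LL) : (Dd F).coeff (-1) = 0 := by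
  rw [Dd_coeff]; norm_num

lemma Dd_smul (c : ℂ) (F : LL) : Dd (c • F) = c • Dd F := by
  ext v
  rw [Dd_coeff, coeff_smul, coeff_smul, Dd_coeff, smul_eq_mul, smul_eq_mul]
  ring

/-- residue pairing -/
def B (F G : LL) : ℂ := ((F * Dd G).coeff (-1))

lemma B_antisym (F G : LL) : B F G + B G F = 0 := by
  rw [B, B, ← coeff_add, mul_comm G (Dd F)]
  rw [show F * Dd G + Dd F * G = Dd F * G + F * Dd G from add_comm _ _, ← Dd_mul,
    Dd_coeff_neg_one]

lemma Dd_one : Dd (1 : LL) = 0 := by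
  have : Tf (1 : LL) = 0 := by
    ext v
    rw [Tf_coeff, coeff_one]
    split
    · subst ‹v = 0›; simp
    · simp
  rw [Dd, this, mul_zero]

lemma csmul_mul (c : ℂ) (F G : LL) : (c • F) * G = c • (F * G) := by
  rw [← single_zero_mul_eq_smul, ← single_zero_mul_eq_smul, mul_assoc]

lemma cmul_smul (c : ℂ) (F G : LL) : F * (c • G) = c • (F * G) := by
  rw [← single_zero_mul_eq_smul, ← single_zero_mul_eq_smul, mul_left_comm]

lemma Dd_zero : Dd (0 : LL) = 0 := by
  have : Tf (0 : LL) = 0 := by ext v; simp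
  rw [Dd, this, mul_zero]

lemma Dd_pow (u : LL) : ∀ m : ℕ, Dd (u ^ (m + 1)) = ((m : ℂ) + 1) • (u ^ m * Dd u) := by
  intro m
  induction m with
  | zero => simp
  | succ m ih =>
    rw [pow_succ, Dd_mul, ih, csmul_mul]
    have h1 : u ^ m * Dd u * u = u ^ (m+1) * Dd u := by rw [pow_succ]; ring
    rw [h1]
    push_cast
    module

lemma B_pow (u : LL) (a b : ℕ) : B (u ^ a) (u ^ b) = 0 := by
  cases b with
  | zero => rw [B, pow_zero, Dd_one, mul_zero]; simp
  | succ c =>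
    have hne : ((a:ℂ) + (c:ℂ) + 1) ≠ 0 := by
      have h : (((a + c + 1 : ℕ)):ℂ) ≠ 0 := Nat.cast_ne_zero.mpr (Nat.succ_ne_zero _)
      push_cast at h; exact h
    have key : (u ^ (a + c) * Dd u).coeff (-1) = 0 := by
      have h0 := Dd_coeff_neg_one (u ^ (a + c + 1))
      rw [Dd_pow u (a + c), coeff_smul, smul_eq_mul] at h0
      push_cast at h0 hne
      rcases mul_eq_zero.mp h0 with h | h
      · exact absurd h hne
      · exact h
    rw [B, Dd_pow u c, cmul_smul, coeff_smul, smul_eq_mul, ← mul_assoc, ← _root_.pow_add, key, mul_zero]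

lemma B_add_left (F F' G : LL) : B (F + F') G = B F G + B F' G := by
  rw [B, B, B, add_mul, coeff_add]

lemma B_add_right (F G G' : LL) : B F (G + G') = B F G + B F G' := by
  rw [B, B, B, Dd_add, mul_add, coeff_add]

lemma B_smul_left (c : ℂ) (F G : LL) : B (c • F) G = c * B F G := by
  rw [B, B, csmul_mul, coeff_smul, smul_eq_mul]

lemma B_smul_right (c : ℂ) (F G : LL) : B F (c • G) = c * B F G := by
  rw [B, B, Dd_smul, cmul_smul, coeff_smul, smul_eq_mul]

lemma B_zero_left (G : LL) : B 0 G = 0 := by rw [B, zero_mul]; simp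

lemma B_zero_right (F : LL) : B F 0 = 0 := by
  rw [B, Dd_zero, mul_zero]; simp

/-- the span of powers of `u` -/
def N (u : LL) : Submodule ℂ LL := Submodule.span ℂ (Set.range fun p : ℕ => u ^ p)

lemma B_vanish_right (u : LL) (a : ℕ) {g : LL} (hg : g ∈ N u) : B (u ^ a) g = 0 := by
  induction hg using Submodule.span_induction with
  | mem x hx => obtain ⟨b, rfl⟩ := hx; exact B_pow u a b
  | zero => exact B_zero_right _
  | add x y _ _ hx hy => rw [B_add_right, hx, hy, add_zero]
  | smul c x _ hx => rw [B_smul_right, hx, mul_zero]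

lemma B_vanish (u : LL) {f g : LL} (hf : f ∈ N u) (hg : g ∈ N u) : B f g = 0 := by
  induction hf using Submodule.span_induction with
  | mem x hx => obtain ⟨a, rfl⟩ := hx; exact B_vanish_right u a hg
  | zero => exact B_zero_left _
  | add x y _ _ hx hy => rw [B_add_left, hx, hy, add_zero]
  | smul c x _ hx => rw [B_smul_left, hx, mul_zero]

lemma mul_u_mem (u : LL) {x : LL} (hx : x ∈ N u) : x * u ∈ N u := by
  induction hx using Submodule.span_induction with
  | mem x hx =>
    obtain ⟨p, rfl⟩ := hx
    exact Submodule.subset_span ⟨p + 1, by simp [pow_succ]⟩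
  | zero => rw [zero_mul]; exact Submodule.zero_mem _
  | add x y _ _ hx hy => rw [add_mul]; exact Submodule.add_mem _ hx hy
  | smul c x _ hx => rw [csmul_mul]; exact Submodule.smul_mem _ _ hx

lemma one_mem_N (u : LL) : (1 : LL) ∈ N u := Submodule.subset_span ⟨0, by simp⟩

lemma sum_coeff' {α : Type*} (s : Finset α) (f : α → LL) (v : ℤ) :
    (∑ a ∈ s, f a).coeff v = ∑ a ∈ s, (f a).coeff v :=
  map_sum (coeff.addMonoidHom v) f s

/-- the tail series of `w j` -/
def E (H : ℕ → ℕ → ℂ) (j : ℕ) : LL :=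
  ofSuppBddBelow (fun v => if 1 ≤ v then H j v.toNat else 0)
    ⟨1, by
      intro v hv
      simp only [Function.mem_support, ne_eq] at hv
      by_contra h
      push_neg at h
      exact hv (if_neg (by omega))⟩

lemma E_coeff (H : ℕ → ℕ → ℂ) (j : ℕ) (v : ℤ) :
    (E H j).coeff v = if 1 ≤ v then H j v.toNat else 0 := rfl

lemma E_coeff_nat (H : ℕ → ℕ → ℂ) (j : ℕ) {m : ℕ} (hm : 1 ≤ m) :
    (E H j).coeff (m : ℤ) = H j m := by
  rw [E_coeff, if_pos (by exact_mod_cast hm), Int.toNat_natCast]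

lemma E_coeff_nonpos (H : ℕ → ℕ → ℂ) (j : ℕ) {v : ℤ} (hv : v ≤ 0) :
    (E H j).coeff v = 0 := by
  rw [E_coeff, if_neg (by omega)]

lemma E_support (H : ℕ → ℕ → ℂ) (j : ℕ) : (E H j).support ⊆ Set.Ici (1 : ℤ) := by
  intro v hv
  simp only [HahnSeries.support, Function.mem_support, ne_eq] at hv
  by_contra h
  simp only [Set.mem_Ici, not_le] at h
  exact hv (E_coeff_nonpos H j (by omega))

/-- the basis series -/
def w (H : ℕ → ℕ → ℂ) (j : ℕ) : LL := single (-(j : ℤ)) 1 + E H j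

lemma single_shift (x : LL) (j v : ℤ) :
    (single (-j) (1 : ℂ) * x).coeff v = x.coeff (v + j) := by
  have h := coeff_single_mul_add (r := (1:ℂ)) (x := x) (a := v + j) (b := -j)
  rw [show v + j + -j = v by ring] at h
  rw [h, one_mul]

lemma shift_single (x : LL) (j v : ℤ) :
    (x * single (-j) (1 : ℂ)).coeff v = x.coeff (v + j) := by
  rw [mul_comm, single_shift]

lemma EE_coeff_le (H : ℕ → ℕ → ℂ) (j k : ℕ) {v : ℤ} (hv : v ≤ 1) :
    (E H j * E H k).coeff v = 0 := by
  by_contra h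
  have hmem : v ∈ (E H j * E H k).support := Function.mem_support.mpr h
  obtain ⟨a, ha, b, hb, hab⟩ := support_mul_subset hmem
  have hab' : a + b = v := hab
  have ha' : (1:ℤ) ≤ a := E_support H j ha
  have hb' : (1:ℤ) ≤ b := E_support H k hb
  omega

lemma EE_coeff_nat (H : ℕ → ℕ → ℂ) (j k m : ℕ) :
    (E H j * E H k).coeff (m : ℤ) = ∑ l ∈ Finset.Ico 1 m, H j l * H k (m - l) := by
  by_cases hm : m ≤ 1
  · rw [EE_coeff_le H j k (by exact_mod_cast hm)]
    have : Finset.Ico 1 m = ∅ := by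
      apply Finset.eq_empty_of_forall_notMem
      intro x hx; rw [Finset.mem_Ico] at hx; omega
    rw [this, Finset.sum_empty]
  · push_neg at hm
    rw [coeff_mul]
    have hinj : Function.Injective (fun l : ℕ => ((l : ℤ), (m : ℤ) - l)) := by
      intro a b hab
      have := congrArg Prod.fst hab
      simpa using this
    set S : Finset (ℤ × ℤ) :=
      (Finset.Ico 1 m).map ⟨fun l : ℕ => ((l : ℤ), (m : ℤ) - l), hinj⟩ with hS
    have hsub : Finset.antidiagonal (E H j).isPWO_support (E H k).isPWO_support (m : ℤ) ⊆ S := by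
      rintro ⟨a, b⟩ hab
      rw [Finset.mem_addAntidiagonal] at hab
      obtain ⟨ha, hb, habm⟩ := hab
      have ha' : (1:ℤ) ≤ a := E_support H j ha
      have hb' : (1:ℤ) ≤ b := E_support H k hb
      rw [hS, Finset.mem_map]
      refine ⟨a.toNat, ?_, ?_⟩
      · rw [Finset.mem_Ico]; omega
      · have h1 : (a.toNat : ℤ) = a := Int.toNat_of_nonneg (by omega)
        simp only [Function.Embedding.coeFn_mk, h1]
        have : (m:ℤ) - a = b := by omega
        rw [this]
    have hzero : ∀ x ∈ S, x ∉ Finset.antidiagonal (E H j).isPWO_support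
        (E H k).isPWO_support (m : ℤ) → (E H j).coeff x.1 * (E H k).coeff x.2 = 0 := by
      rintro ⟨a, b⟩ hx hnot
      rw [Finset.mem_addAntidiagonal] at hnot
      rw [hS, Finset.mem_map] at hx
      obtain ⟨l, hl, heq⟩ := hx
      simp only [Function.Embedding.coeFn_mk, Prod.mk.injEq] at heq
      have habm : a + b = (m : ℤ) := by omega
      by_cases hja : (E H j).coeff a = 0
      · rw [hja, zero_mul]
      · by_cases hkb : (E H k).coeff b = 0
        · rw [hkb, mul_zero]
        · exact absurd ⟨hja, hkb, habm⟩ hnot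
    rw [Finset.sum_subset hsub hzero, hS, Finset.sum_map]
    apply Finset.sum_congr rfl
    intro l hl
    rw [Finset.mem_Ico] at hl
    simp only [Function.Embedding.coeFn_mk]
    have h1 : (E H j).coeff (l : ℤ) = H j l := E_coeff_nat H j hl.1
    have h2 : ((m : ℤ) - l) = ((m - l : ℕ) : ℤ) := by
      have : l ≤ m := le_of_lt hl.2
      push_cast [this]; ring
    rw [h1, h2, E_coeff_nat H k (by omega)]

lemma sum_single_eval (c : ℕ → ℂ) (j p : ℕ) :
    ∑ l ∈ Finset.Ico 1 j, c l * (single (-(l:ℤ)) (1:ℂ)).coeff (-(p:ℤ)) =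
      if p ∈ Finset.Ico 1 j then c p else 0 := by
  have h : ∀ l ∈ Finset.Ico 1 j,
      c l * (single (-(l:ℤ)) (1:ℂ)).coeff (-(p:ℤ)) = if l = p then c l else 0 := by
    intro l hl
    rw [coeff_single]
    by_cases hlp : l = p
    · subst hlp; rw [if_pos rfl, if_pos rfl, mul_one]
    · rw [if_neg (by omega), if_neg hlp, mul_zero]
  rw [Finset.sum_congr rfl h, Finset.sum_ite_eq' (Finset.Ico 1 j) p c]

lemma E_coeff_shift (H : ℕ → ℕ → ℂ) (k j p : ℕ) (hp : 1 ≤ p) :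
    (E H k).coeff (-(p:ℤ) + j) = if p ∈ Finset.Ico 1 j then H k (j - p) else 0 := by
  by_cases hpj : p < j
  · have h1 : (-(p:ℤ) + j) = ((j - p : ℕ) : ℤ) := by
      have : p ≤ j := le_of_lt hpj
      push_cast [this]; ring
    rw [h1, E_coeff_nat H k (by omega), if_pos (Finset.mem_Ico.mpr ⟨hp, hpj⟩)]
  · rw [E_coeff_nonpos H k (by omega), if_neg (by rw [Finset.mem_Ico]; omega)]

theorem w_mul (H : ℕ → ℕ → ℂ)
    (hassoc : ∀ j k m : ℕ, 1 ≤ j → 1 ≤ k → 1 ≤ m →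
      H (j + k) m - H j (m + k) - H k (j + m)
        + ∑ l ∈ Finset.Ico 1 j, H k (j - l) * H l m
        + ∑ l ∈ Finset.Ico 1 k, H j (k - l) * H l m
        - ∑ l ∈ Finset.Ico 1 m, H k (m - l) * H j l = 0)
    (j k : ℕ) (hj : 1 ≤ j) (hk : 1 ≤ k) :
    w H j * w H k = w H (j + k) + (∑ l ∈ Finset.Ico 1 j, H k (j - l) • w H l)
      + (∑ l ∈ Finset.Ico 1 k, H j (k - l) • w H l) + (H k j + H j k) • (1 : LL) := by
  ext v
  rw [show w H j * w H k = single (-(j:ℤ)) 1 * single (-(k:ℤ)) 1 + single (-(j:ℤ)) 1 * E H k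
      + E H j * single (-(k:ℤ)) 1 + E H j * E H k by rw [w, w]; ring]
  rw [single_mul_single, one_mul, show -(j:ℤ) + -(k:ℤ) = -(((j+k:ℕ)):ℤ) by push_cast; ring]
  simp only [coeff_add, single_shift, shift_single, sum_coeff', coeff_smul, smul_eq_mul, w]
  rcases lt_trichotomy v 0 with hv | rfl | hv
  · -- v negative
    obtain ⟨p, hp⟩ := Int.eq_ofNat_of_zero_le (le_of_lt (neg_pos.mpr hv))
    have hv' : v = -(p:ℤ) := by omega
    subst hv'
    have hp1 : 1 ≤ p := by omega
    have h1 : (E H (j+k)).coeff (-(p:ℤ)) = 0 := E_coeff_nonpos _ _ (by omega)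
    have h2 : (E H j * E H k).coeff (-(p:ℤ)) = 0 := EE_coeff_le _ _ _ (by omega)
    have h3 : (1 : LL).coeff (-(p:ℤ)) = 0 := by
      rw [coeff_one, if_neg (by omega)]
    have h5 : ∀ l : ℕ, (E H l).coeff (-(p:ℤ)) = 0 := fun l => E_coeff_nonpos _ _ (by omega)
    simp only [h5, add_zero, h1, h2, h3, mul_zero]
    rw [sum_single_eval (fun l => H k (j - l)) j p, sum_single_eval (fun l => H j (k - l)) k p,
      E_coeff_shift H k j p hp1, E_coeff_shift H j k p hp1]
  · -- v = 0
    have h1 : (E H (j+k)).coeff (0:ℤ) = 0 := E_coeff_nonpos _ _ le_rfl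
    have h2 : (E H j * E H k).coeff (0:ℤ) = 0 := EE_coeff_le _ _ _ (by omega)
    have h3 : (1 : LL).coeff (0:ℤ) = 1 := by rw [coeff_one, if_pos rfl]
    have h5 : ∀ l : ℕ, (E H l).coeff (0:ℤ) = 0 := fun l => E_coeff_nonpos _ _ le_rfl
    have h6 : ∀ l ∈ Finset.Ico 1 j, H k (j - l) *
        ((single (-(l:ℤ)) (1:ℂ)).coeff (0:ℤ) + (E H l).coeff (0:ℤ)) = 0 := by
      intro l hl
      rw [Finset.mem_Ico] at hl
      rw [h5, coeff_single_of_ne (by omega), add_zero, mul_zero]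
    have h7 : ∀ l ∈ Finset.Ico 1 k, H j (k - l) *
        ((single (-(l:ℤ)) (1:ℂ)).coeff (0:ℤ) + (E H l).coeff (0:ℤ)) = 0 := by
      intro l hl
      rw [Finset.mem_Ico] at hl
      rw [h5, coeff_single_of_ne (by omega), add_zero, mul_zero]
    rw [Finset.sum_congr rfl h6, Finset.sum_congr rfl h7, Finset.sum_const_zero,
      Finset.sum_const_zero]
    have hE1 : (E H k).coeff ((0:ℤ) + j) = H k j := by
      rw [zero_add, E_coeff_nat H k hj]
    have hE2 : (E H j).coeff ((0:ℤ) + k) = H j k := by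
      rw [zero_add, E_coeff_nat H j hk]
    rw [hE1, hE2, h1, h2, h3,
      coeff_single_of_ne (show (0:ℤ) ≠ -((j+k:ℕ):ℤ) by omega)]
    ring
  · -- v positive
    obtain ⟨m, rfl⟩ := Int.eq_ofNat_of_zero_le (le_of_lt hv)
    have hm : 1 ≤ m := by omega
    have hs : ((m:ℤ)) ≠ -(((j+k:ℕ)):ℤ) := by omega
    have hE1 : (E H k).coeff ((m:ℤ) + j) = H k (j + m) := by
      rw [show ((m:ℤ) + j) = (((m+j:ℕ)):ℤ) by push_cast; ring, E_coeff_nat H k (by omega),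
        Nat.add_comm]
    have hE2 : (E H j).coeff ((m:ℤ) + k) = H j (m + k) := by
      rw [show ((m:ℤ) + k) = (((m+k:ℕ)):ℤ) by push_cast; ring, E_coeff_nat H j (by omega)]
    have h3 : (1 : LL).coeff ((m:ℤ)) = 0 := by rw [coeff_one, if_neg (by omega)]
    have h6 : ∀ l ∈ Finset.Ico 1 j, H k (j - l) *
        ((single (-(l:ℤ)) (1:ℂ)).coeff ((m:ℤ)) + (E H l).coeff ((m:ℤ)))
        = H k (j - l) * H l m := by
      intro l hl
      rw [Finset.mem_Ico] at hl
      rw [coeff_single_of_ne (by omega), zero_add, E_coeff_nat H l hm]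
    have h7 : ∀ l ∈ Finset.Ico 1 k, H j (k - l) *
        ((single (-(l:ℤ)) (1:ℂ)).coeff ((m:ℤ)) + (E H l).coeff ((m:ℤ)))
        = H j (k - l) * H l m := by
      intro l hl
      rw [Finset.mem_Ico] at hl
      rw [coeff_single_of_ne (by omega), zero_add, E_coeff_nat H l hm]
    rw [Finset.sum_congr rfl h6, Finset.sum_congr rfl h7, hE1, hE2, EE_coeff_nat,
      E_coeff_nat H (j+k) hm]
    have hEE : ∑ l ∈ Finset.Ico 1 m, H j l * H k (m - l)
        = ∑ l ∈ Finset.Ico 1 m, H k (m - l) * H j l :=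
      Finset.sum_congr rfl fun l _ => mul_comm _ _
    rw [hEE, h3]
    linear_combination (-1 : ℂ) * (hassoc j k m hj hk hm)

lemma w_mem (H : ℕ → ℕ → ℂ)
    (hassoc : ∀ j k m : ℕ, 1 ≤ j → 1 ≤ k → 1 ≤ m →
      H (j + k) m - H j (m + k) - H k (j + m)
        + ∑ l ∈ Finset.Ico 1 j, H k (j - l) * H l m
        + ∑ l ∈ Finset.Ico 1 k, H j (k - l) * H l m
        - ∑ l ∈ Finset.Ico 1 m, H k (m - l) * H j l = 0) :
    ∀ n : ℕ, 1 ≤ n → w H n ∈ N (w H 1) := by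
  intro n
  induction n using Nat.strong_induction_on with
  | _ n ih =>
    intro hn
    match n, hn with
    | 1, _ => exact Submodule.subset_span ⟨1, by simp⟩
    | (m+2), _ =>
      have hm : 1 ≤ m + 1 := by omega
      have hprod := w_mul H hassoc (m+1) 1 hm le_rfl
      rw [Finset.Ico_self, Finset.sum_empty] at hprod
      have hw : w H (m + 2) = w H (m+1) * w H 1
          - (∑ l ∈ Finset.Ico 1 (m+1), H 1 (m + 1 - l) • w H l)
          - (H 1 (m+1) + H (m+1) 1) • (1 : LL) := by
        rw [hprod]; ring
      rw [hw]
      refine Submodule.sub_mem _ (Submodule.sub_mem _ ?_ ?_) ?_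
      · exact mul_u_mem _ (ih (m+1) (by omega) hm)
      · refine Submodule.sum_mem _ ?_
        intro l hl
        rw [Finset.mem_Ico] at hl
        exact Submodule.smul_mem _ _ (ih l (by omega) hl.1)
      · exact Submodule.smul_mem _ _ (one_mem_N _)

lemma Dd_single (a : ℤ) : Dd (single a (1:ℂ)) = single (a - 1) ((a : ℂ)) := by
  ext v
  rw [Dd_coeff, coeff_single, coeff_single]
  by_cases h : v + 1 = a
  · rw [if_pos h, if_pos (by omega), mul_one]
    have h2 : ((v:ℂ) + 1) = ((v + 1 : ℤ) : ℂ) := by push_cast; ring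
    rw [h2, h]
  · rw [if_neg h, if_neg (by omega), mul_zero]

lemma DdE_support (H : ℕ → ℕ → ℂ) (n : ℕ) : (Dd (E H n)).support ⊆ Set.Ici (0 : ℤ) := by
  intro v hv
  simp only [HahnSeries.support, Function.mem_support, ne_eq] at hv
  by_contra h
  simp only [Set.mem_Ici, not_le] at h
  exact hv (by rw [Dd_coeff, E_coeff_nonpos H n (by omega), mul_zero])

lemma B_w (H : ℕ → ℕ → ℂ) (i n : ℕ) (hi : 1 ≤ i) (hn : 1 ≤ n) :
    B (w H i) (w H n) = (i:ℂ) * H n i - (n:ℂ) * H i n := by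
  rw [B, w, w, Dd_add, Dd_single, Int.cast_neg, Int.cast_natCast]
  rw [show (single (-(i:ℤ)) 1 + E H i) * (single (-(n:ℤ) - 1) (-(n:ℂ)) + Dd (E H n))
      = single (-(i:ℤ)) 1 * single (-(n:ℤ) - 1) (-(n:ℂ))
        + single (-(i:ℤ)) 1 * Dd (E H n)
        + E H i * single (-(n:ℤ) - 1) (-(n:ℂ))
        + E H i * Dd (E H n) by ring]
  rw [coeff_add, coeff_add, coeff_add]
  have hA : (single (-(i:ℤ)) 1 * single (-(n:ℤ) - 1) (-(n:ℂ))).coeff (-1) = 0 := by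
    rw [single_mul_single, coeff_single_of_ne (by omega)]
  have hB : (single (-(i:ℤ)) 1 * Dd (E H n)).coeff (-1) = (i:ℂ) * H n i := by
    rw [single_shift, Dd_coeff]
    have h1 : (-1 + (i:ℤ) + 1) = ((i:ℕ):ℤ) := by ring
    rw [h1, E_coeff_nat H n hi]
    push_cast
    ring
  have hC : (E H i * single (-(n:ℤ) - 1) (-(n:ℂ))).coeff (-1) = -((n:ℂ) * H i n) := by
    have h := coeff_mul_single_add (r := (-(n:ℂ))) (x := E H i)
      (a := ((n:ℕ):ℤ)) (b := -(n:ℤ) - 1)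
    rw [show ((n:ℕ):ℤ) + (-(n:ℤ) - 1) = (-1 : ℤ) by ring] at h
    rw [h, E_coeff_nat H i hn]
    ring
  have hD : (E H i * Dd (E H n)).coeff (-1) = 0 := by
    by_contra hne
    obtain ⟨a, ha, b, hb, hab⟩ :=
      support_mul_subset (Function.mem_support.mpr hne)
    have hab' : a + b = (-1 : ℤ) := hab
    have ha' : (1:ℤ) ≤ a := E_support H i ha
    have hb' : (0:ℤ) ≤ b := DdE_support H n hb
    omega
  rw [hA, hB, hC, hD]
  ring

/-- the big-cell associativity conditions imply `n H^i_n = i H^n_i`. -/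
theorem bigcell_associativity_symmetry (H : ℕ → ℕ → ℂ)
    (hassoc : ∀ j k m : ℕ, 1 ≤ j → 1 ≤ k → 1 ≤ m →
      H (j + k) m - H j (m + k) - H k (j + m)
        + ∑ l ∈ Finset.Ico 1 j, H k (j - l) * H l m
        + ∑ l ∈ Finset.Ico 1 k, H j (k - l) * H l m
        - ∑ l ∈ Finset.Ico 1 m, H k (m - l) * H j l = 0) :
    ∀ i n : ℕ, 1 ≤ i → 1 ≤ n → (n : ℂ) * H i n = (i : ℂ) * H n i := by
  intro i n hi hn
  have h0 : B (w H i) (w H n) = 0 :=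
    B_vanish (w H 1) (w_mem H hassoc i hi) (w_mem H hassoc n hn)
  rw [B_w H i n hi hn] at h0
  linear_combination -h0
end
end
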